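/- For each n ≥ 1 and conjugate exponent pair (p,q), the optimal constant K_{n,p} = 2^{−n−1/q} ‖φ̃_n‖_{L^q([-1,1])}/n! (where φ̃_n minimizes the L^q norm among monic degree-n polynomials on [-1,1]) is a nonincreasing function of p; in particular K_{n,p} ≤ K_{n,1} = 2^{1−2n}/n! for all p ∈ [1,∞]. -/

import Mathlib

open MeasureTheory Polynomial
open scoped ENNReal

/-- The optimal constant `K_{n,p} = 2^{-n-1/q} ‖φ̃ₙ‖_{L^q([-1,1])}/n!`, expressed as the
infimum over monic degree-`n` polynomials, parametrized by the conjugate exponent `q`. -/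
noncomputable def trapConst (n : ℕ) (q : ℝ≥0∞) : ℝ≥0∞ :=
  sInf ((fun φ : Polynomial ℝ =>
    ENNReal.ofReal ((2 : ℝ) ^ (-(n : ℝ) - q⁻¹.toReal)) *
      eLpNorm (fun x => φ.eval x) q (volume.restrict (Set.Icc (-1 : ℝ) 1)) /
      (n.factorial : ℝ≥0∞)) '' {φ : Polynomial ℝ | φ.Monic ∧ φ.natDegree = n})

open Real Set

lemma T_coeff_aux : ∀ n : ℕ, (Chebyshev.T ℝ n).natDegree ≤ n ∧
    (Chebyshev.T ℝ n).coeff n = if n = 0 then 1 else 2 ^ (n - 1) := by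
  intro n
  induction n using Nat.twoStepInduction with
  | zero => simp [Chebyshev.T_zero]
  | one => simp [Chebyshev.T_one]
  | more n ih1 ih2 =>
    have key : Chebyshev.T ℝ ((n + 2 : ℕ) : ℤ) =
        2 * X * Chebyshev.T ℝ ((n + 1 : ℕ) : ℤ) - Chebyshev.T ℝ (n : ℤ) := by
      push_cast
      exact Chebyshev.T_add_two ℝ n
    constructor
    · rw [key]
      refine (natDegree_sub_le _ _).trans (max_le ?_ (ih1.1.trans (by omega)))
      refine (natDegree_mul_le).trans ?_
      have h2X : (2 * X : ℝ[X]).natDegree ≤ 1 := by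
        compute_degree
      omega
    · rw [key, coeff_sub]
      have h0 : (Chebyshev.T ℝ (n : ℤ)).coeff (n + 2) = 0 :=
        coeff_eq_zero_of_natDegree_lt (by omega)
      have h1 : (2 * X * Chebyshev.T ℝ ((n + 1 : ℕ) : ℤ)).coeff (n + 2)
          = 2 * (Chebyshev.T ℝ ((n + 1 : ℕ) : ℤ)).coeff (n + 1) := by
        rw [mul_assoc, (map_ofNat C 2).symm, coeff_C_mul, coeff_X_mul]
      rw [h0, h1, ih2.2]
      simp [pow_succ]
      ring

lemma T_natDegree (n : ℕ) : (Chebyshev.T ℝ n).natDegree = n := by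
  refine le_antisymm (T_coeff_aux n).1 (le_natDegree_of_ne_zero ?_)
  rw [(T_coeff_aux n).2]
  split <;> positivity

lemma T_leadingCoeff {n : ℕ} (hn : 1 ≤ n) :
    (Chebyshev.T ℝ n).leadingCoeff = 2 ^ (n - 1) := by
  rw [leadingCoeff, T_natDegree, (T_coeff_aux n).2, if_neg (by omega)]

noncomputable def mcheb (n : ℕ) : ℝ[X] := C ((2 : ℝ) ^ ((1 : ℤ) - (n : ℤ))) * Chebyshev.T ℝ n

lemma mcheb_monic {n : ℕ} (hn : 1 ≤ n) : (mcheb n).Monic := by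
  have h2 : ((2 : ℝ) ^ ((1 : ℤ) - (n : ℤ))) ≠ 0 := by positivity
  rw [Monic, mcheb, leadingCoeff_mul, leadingCoeff_C, T_leadingCoeff hn]
  have : ((2:ℝ)) ^ (n - 1) = (2:ℝ) ^ ((n : ℤ) - 1) := by
    rw [← zpow_natCast]
    congr 1
    omega
  rw [this, ← zpow_add₀ (two_ne_zero)]
  norm_num

lemma mcheb_natDegree {n : ℕ} : (mcheb n).natDegree = n := by
  rw [mcheb, natDegree_C_mul (by positivity), T_natDegree]

lemma T_eval_mem (n : ℕ) {x : ℝ} (hx : x ∈ Icc (-1 : ℝ) 1) :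
    |(Chebyshev.T ℝ n).eval x| ≤ 1 := by
  have := Real.cos_arccos hx.1 hx.2
  rw [← this, Chebyshev.T_real_cos]
  exact abs_cos_le_one _

lemma mcheb_eval_le {n : ℕ} {x : ℝ} (hx : x ∈ Icc (-1 : ℝ) 1) :
    |(mcheb n).eval x| ≤ (2 : ℝ) ^ ((1 : ℤ) - (n : ℤ)) := by
  rw [mcheb, eval_mul, eval_C, abs_mul, abs_of_pos (by positivity)]
  calc (2:ℝ) ^ ((1:ℤ) - n) * |(Chebyshev.T ℝ n).eval x|
      ≤ (2:ℝ) ^ ((1:ℤ) - n) * 1 := by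
        exact mul_le_mul_of_nonneg_left (T_eval_mem n hx) (by positivity)
    _ = _ := mul_one _

lemma mcheb_eval_one {n : ℕ} : (mcheb n).eval 1 = (2 : ℝ) ^ ((1 : ℤ) - (n : ℤ)) := by
  have h1 : (Chebyshev.T ℝ n).eval 1 = 1 := by
    have := Chebyshev.T_real_cos 0 (n : ℤ)
    simpa using this
  rw [mcheb, eval_mul, eval_C, h1, mul_one]

lemma point_le_eLpNormTop {f : ℝ → ℝ} (hf : Continuous f) {x₀ : ℝ}
    (hx : x₀ ∈ Icc (-1 : ℝ) 1) :
    ENNReal.ofReal |f x₀| ≤ eLpNorm f ⊤ (volume.restrict (Icc (-1 : ℝ) 1)) := by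
  set μ := volume.restrict (Icc (-1 : ℝ) 1)
  rw [eLpNorm_exponent_top]
  by_contra hlt
  push_neg at hlt
  set c := eLpNormEssSup f μ with hc
  have hctop : c ≠ ⊤ := hlt.ne_top
  have hcr : c.toReal < |f x₀| := by
    rwa [ENNReal.lt_ofReal_iff_toReal_lt hctop] at hlt
  -- the ae bound
  have hae : ∀ᵐ x ∂μ, (‖f x‖₊ : ℝ≥0∞) ≤ c := ae_le_eLpNormEssSup
  rw [ae_restrict_iff' measurableSet_Icc] at hae
  -- the bad set
  obtain ⟨δ, hδ, hball⟩ := Metric.continuous_iff.1 (continuous_abs.comp hf) x₀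
    (|f x₀| - c.toReal) (by linarith)
  set a : ℝ := max (-1) (x₀ - δ/2)
  set b : ℝ := min 1 (x₀ + δ/2)
  have hab : a < b := by
    have h1 := hx.1; have h2 := hx.2
    simp only [a, b, lt_min_iff, max_lt_iff]
    constructor <;> constructor <;> linarith
  have hsub : Icc a b ⊆ {x | ¬(x ∈ Icc (-1:ℝ) 1 → (‖f x‖₊ : ℝ≥0∞) ≤ c)} := by
    intro x hxab
    have hxI : x ∈ Icc (-1:ℝ) 1 :=
      ⟨le_trans (le_max_left _ _) hxab.1, le_trans hxab.2 (min_le_left _ _)⟩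
    have hdist : dist x x₀ < δ := by
      rw [Real.dist_eq, abs_lt]
      have h1 : x₀ - δ/2 ≤ x := le_trans (le_max_right _ _) hxab.1
      have h2 : x ≤ x₀ + δ/2 := le_trans hxab.2 (min_le_right _ _)
      constructor <;> linarith
    have := hball x hdist
    rw [Real.dist_eq] at this
    have hfx : c.toReal < |f x| := by
      cases abs_lt.1 this with
      | intro h1 h2 => simp only [Function.comp] at h1 h2 ⊢; linarith [abs_nonneg (f x), neg_abs_le (|f x| - |f x₀|)]
    intro hcon
    have h2 : (‖f x‖₊ : ℝ≥0∞) ≤ c := hcon hxI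
    have : |f x| ≤ c.toReal := by
      have := ENNReal.toReal_mono hctop h2
      simpa [Real.norm_eq_abs] using this
    linarith
  have h0 : μ.restrict Set.univ = μ := by simp
  have hmeas0 : volume {x | ¬(x ∈ Icc (-1:ℝ) 1 → (‖f x‖₊ : ℝ≥0∞) ≤ c)} = 0 := hae
  have : volume (Icc a b) = 0 :=
    measure_mono_null hsub hmeas0
  rw [Real.volume_Icc] at this
  simp only [ENNReal.ofReal_eq_zero] at this
  linarith

lemma exists_root_of_mul_neg {f : ℝ → ℝ} (hf : Continuous f) {a b : ℝ} (hab : a < b)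
    (h : f a * f b < 0) : ∃ z ∈ Ioo a b, f z = 0 := by
  rcases lt_or_ge (f a) 0 with ha | ha
  · have hb : 0 < f b := by nlinarith
    obtain ⟨z, hz, hz0⟩ := intermediate_value_Ioo hab.le hf.continuousOn (⟨ha, hb⟩ : (0:ℝ) ∈ Ioo (f a) (f b))
    exact ⟨z, hz, hz0⟩
  · have ha' : 0 < f a := lt_of_le_of_ne ha (fun h0 => by rw [← h0] at h; simp at h)
    have hb : f b < 0 := by nlinarith
    obtain ⟨z, hz, hz0⟩ := intermediate_value_Ioo' hab.le hf.continuousOn (⟨hb, ha'⟩ : (0:ℝ) ∈ Ioo (f b) (f a))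
    exact ⟨z, hz, hz0⟩

lemma neg_one_zpow_cases (m : ℤ) : ((-1:ℝ)^m = 1 ∨ (-1:ℝ)^m = -1) :=
  m.even_or_odd.imp (fun h => h.neg_one_zpow) (fun h => h.neg_one_zpow)

lemma cheb_extremal {n : ℕ} (hn : 1 ≤ n) {φ : ℝ[X]} (hmon : φ.Monic) (hdeg : φ.natDegree = n)
    (hlt : ∀ x ∈ Icc (-1:ℝ) 1, |φ.eval x| < (2:ℝ) ^ ((1:ℤ) - (n:ℤ))) : False := by
  set r := mcheb n - φ with hr
  have hne : r ≠ 0 := by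
    intro h0
    have hφt : φ = mcheb n := by rwa [sub_eq_zero, eq_comm] at h0
    have h1 := hlt 1 (by norm_num)
    rw [hφt, mcheb_eval_one, abs_of_pos (by positivity)] at h1
    exact lt_irrefl _ h1
  have hdr : r.natDegree < n := by
    have h1 : (mcheb n).degree = φ.degree := by
      rw [degree_eq_natDegree (mcheb_monic hn).ne_zero, degree_eq_natDegree hmon.ne_zero,
        mcheb_natDegree, hdeg]
    have h2 : r.degree < (mcheb n).degree :=
      degree_sub_lt h1 (mcheb_monic hn).ne_zero
        (by rw [hmon.leadingCoeff, (mcheb_monic hn).leadingCoeff])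
    rw [degree_eq_natDegree (mcheb_monic hn).ne_zero, mcheb_natDegree] at h2
    exact (natDegree_lt_iff_degree_lt hne).2 h2
  have hnpos : (0:ℝ) < n := by exact_mod_cast hn
  set y : ℕ → ℝ := fun k => Real.cos (((n : ℝ) - k) * π / n) with hy
  have hymem : ∀ k, y k ∈ Icc (-1:ℝ) 1 := fun k => ⟨Real.neg_one_le_cos _, Real.cos_le_one _⟩
  have hangle : ∀ k : ℕ, k ≤ n → ((n:ℝ) - k) * π / n ∈ Icc 0 π := by
    intro k hk
    have hk' : (k:ℝ) ≤ n := by exact_mod_cast hk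
    constructor
    · apply div_nonneg (mul_nonneg (by linarith) Real.pi_pos.le) hnpos.le
    · rw [div_le_iff₀ hnpos]
      nlinarith [Real.pi_pos]
  have hmono : ∀ k l : ℕ, k < l → l ≤ n → y k < y l := by
    intro k l hkl hl
    apply Real.strictAntiOn_cos (hangle l hl) (hangle k (le_trans hkl.le hl))
    have hkl' : (k:ℝ) < l := by exact_mod_cast hkl
    apply div_lt_div_of_pos_right ?_ hnpos
    nlinarith [Real.pi_pos]
  have hsign : ∀ k : ℕ, k ≤ n → 0 < (-1:ℝ) ^ ((n:ℤ) - k) * r.eval (y k) := by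
    intro k hk
    have hcos : (Chebyshev.T ℝ (n:ℤ)).eval (y k) = Real.cos ((n:ℝ) * (((n:ℝ) - k) * π / n)) := by
      rw [hy]
      exact Chebyshev.T_real_cos _ _
    have harg : (n:ℝ) * (((n:ℝ) - k) * π / n) = (((n:ℤ) - (k:ℤ)) : ℝ) * π := by
      field_simp
      simp
    have hc2 : Real.cos ((((n:ℤ) - (k:ℤ)) : ℝ) * π) = (-1:ℝ) ^ ((n:ℤ) - k) := by
      have := Real.cos_int_mul_pi_sub 0 ((n:ℤ) - (k:ℤ))
      simpa using this
    have hteval : (mcheb n).eval (y k) = (2:ℝ) ^ ((1:ℤ) - (n:ℤ)) * (-1:ℝ) ^ ((n:ℤ) - k) := by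
      rw [mcheb, eval_mul, eval_C, hcos, harg, hc2]
    have habs := hlt (y k) (hymem k)
    have hreval : r.eval (y k) = (mcheb n).eval (y k) - φ.eval (y k) := by
      rw [hr, eval_sub]
    rcases neg_one_zpow_cases ((n:ℤ) - (k:ℤ)) with h | h
    · rw [h] at hteval ⊢
      rw [hreval, hteval]
      have := (abs_lt.1 habs).2
      simp only [mul_one, one_mul]
      linarith
    · rw [h] at hteval ⊢
      rw [hreval, hteval]
      have := (abs_lt.1 habs).1
      have hpos : (0:ℝ) < (2:ℝ) ^ ((1:ℤ) - (n:ℤ)) := by positivity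
      nlinarith
  have hprod : ∀ k : ℕ, k < n → r.eval (y k) * r.eval (y (k+1)) < 0 := by
    intro k hk
    have hA := hsign k hk.le
    have hB := hsign (k+1) hk
    have hflip : (-1:ℝ) ^ ((n:ℤ) - ((k:ℤ)+1)) = -(-1:ℝ) ^ ((n:ℤ) - k) := by
      have he : ((n:ℤ) - ((k:ℤ)+1)) = ((n:ℤ) - k) - 1 := by ring
      rw [he, zpow_sub₀ (by norm_num : (-1:ℝ) ≠ 0), zpow_one]
      field_simp
    have hcast : ((k+1 : ℕ) : ℤ) = (k:ℤ) + 1 := by push_cast; ring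
    rw [hcast, hflip] at hB
    rcases neg_one_zpow_cases ((n:ℤ) - (k:ℤ)) with h | h
    · rw [h] at hA hB
      simp only [one_mul, neg_mul, neg_pos] at hA hB
      exact mul_neg_of_pos_of_neg hA (by linarith)
    · rw [h] at hA hB
      simp only [neg_mul, one_mul, neg_neg, neg_pos] at hA hB
      exact mul_neg_of_neg_of_pos (by linarith) hB
  have hroot : ∀ k : Fin n, ∃ zz ∈ Ioo (y k) (y ((k:ℕ)+1)), (fun x => r.eval x) zz = 0 := by
    intro k
    exact exists_root_of_mul_neg r.continuous
      (hmono k ((k:ℕ)+1) (Nat.lt_succ_self _) k.2) (hprod k k.2)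
  choose z hz1 hz2 using hroot
  have hzmono : ∀ k l : Fin n, k < l → z k < z l := by
    intro k l hkl
    have h1 : z k < y ((k:ℕ)+1) := (hz1 k).2
    have h3 : y (l:ℕ) < z l := (hz1 l).1
    have hkl' : (k:ℕ) + 1 ≤ (l:ℕ) := hkl
    have h2 : y ((k:ℕ)+1) ≤ y (l:ℕ) := by
      rcases hkl'.lt_or_eq with h | h
      · exact (hmono _ _ h l.2.le).le
      · rw [h]
    linarith
  have hinj : Function.Injective z := by
    intro a b hab
    by_contra hne'
    rcases lt_or_gt_of_ne hne' with h | h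
    exacts [absurd hab (hzmono a b h).ne, absurd hab (hzmono b a h).ne']
  have hsub : (Finset.image z Finset.univ).val ⊆ r.roots := by
    intro x hx
    have hx' : x ∈ Finset.image z Finset.univ := hx
    obtain ⟨k, _, rfl⟩ := Finset.mem_image.1 hx'
    rw [mem_roots hne]
    exact hz2 k
  have hcard := card_le_degree_of_subset_roots hsub
  rw [Finset.card_image_of_injective _ hinj, Finset.card_univ, Fintype.card_fin] at hcard
  omega

/-- `K_{n,p}` is nonincreasing in `p`; in particular `K_{n,p} ≤ K_{n,1} = 2^{1-2n}/n!`. -/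
theorem trapConst_antitone (n : ℕ) (hn : 1 ≤ n) :
    (∀ p₁ q₁ p₂ q₂ : ℝ≥0∞, p₁.HolderConjugate q₁ → p₂.HolderConjugate q₂ →
        p₁ ≤ p₂ → trapConst n q₂ ≤ trapConst n q₁)
    ∧ trapConst n ⊤ = ENNReal.ofReal ((2 : ℝ) ^ ((1 : ℤ) - 2 * n) / n.factorial)
    ∧ ∀ p q : ℝ≥0∞, p.HolderConjugate q → trapConst n q ≤ trapConst n ⊤ := by
  classical
  set μ := volume.restrict (Set.Icc (-1 : ℝ) 1) with hμ
  have hμuniv : μ Set.univ = ENNReal.ofReal 2 := by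
    rw [hμ, Measure.restrict_apply_univ, Real.volume_Icc]; norm_num
  have h1 : ∀ p₁ q₁ p₂ q₂ : ℝ≥0∞, p₁.HolderConjugate q₁ → p₂.HolderConjugate q₂ →
      p₁ ≤ p₂ → trapConst n q₂ ≤ trapConst n q₁ := by
    intro p₁ q₁ p₂ q₂ hc₁ hc₂ hle
    have hq : q₂ ≤ q₁ := by
      have h1' : q₁⁻¹ ≤ q₂⁻¹ := by
        rw [← ENNReal.HolderConjugate.one_sub_inv p₁ q₁, ← ENNReal.HolderConjugate.one_sub_inv p₂ q₂]
        exact tsub_le_tsub_left (ENNReal.inv_le_inv.2 hle) 1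
      exact ENNReal.inv_le_inv.1 h1'
    rw [trapConst, trapConst]
    apply le_sInf
    rintro v ⟨φ, hφ, rfl⟩
    refine le_trans (sInf_le ⟨φ, hφ, rfl⟩) ?_
    set g := fun x => φ.eval x with hg
    have hgm : AEStronglyMeasurable g μ := (Polynomial.continuous φ).aestronglyMeasurable
    set a : ℝ := 1 / q₂.toReal - 1 / q₁.toReal with ha
    have hE := eLpNorm_le_eLpNorm_mul_rpow_measure_univ hq hgm
    rw [hμuniv, ← ha] at hE
    have ha0 : 0 ≤ a := by
      rcases eq_or_ne q₁ ⊤ with h | h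
      · rw [ha, h]
        simp only [ENNReal.toReal_top, div_zero, sub_zero]
        positivity
      · have hq₂top : q₂ ≠ ⊤ := fun hcon => h (top_le_iff.1 (hcon ▸ hq))
        have h0 : 0 < q₂.toReal := ENNReal.toReal_pos (ENNReal.HolderConjugate.ne_zero q₂ p₂) hq₂top
        have h1'' : q₂.toReal ≤ q₁.toReal := ENNReal.toReal_mono h hq
        rw [ha, sub_nonneg]
        exact one_div_le_one_div_of_le h0 h1''
    have h2a : (ENNReal.ofReal 2) ^ a = ENNReal.ofReal ((2:ℝ) ^ a) :=
      ENNReal.ofReal_rpow_of_pos (by norm_num)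
    have hkey : ENNReal.ofReal ((2:ℝ) ^ (-(n:ℝ) - q₂⁻¹.toReal)) * eLpNorm g q₂ μ
        ≤ ENNReal.ofReal ((2:ℝ) ^ (-(n:ℝ) - q₁⁻¹.toReal)) * eLpNorm g q₁ μ := by
      calc ENNReal.ofReal ((2:ℝ) ^ (-(n:ℝ) - q₂⁻¹.toReal)) * eLpNorm g q₂ μ
          ≤ ENNReal.ofReal ((2:ℝ) ^ (-(n:ℝ) - q₂⁻¹.toReal)) *
            (eLpNorm g q₁ μ * ENNReal.ofReal ((2:ℝ) ^ a)) := by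
            rw [← h2a]; exact mul_le_mul_right hE _
        _ = (ENNReal.ofReal ((2:ℝ) ^ (-(n:ℝ) - q₂⁻¹.toReal)) * ENNReal.ofReal ((2:ℝ) ^ a)) *
              eLpNorm g q₁ μ := by ring
        _ = ENNReal.ofReal ((2:ℝ) ^ (-(n:ℝ) - q₁⁻¹.toReal)) * eLpNorm g q₁ μ := by
            rw [← ENNReal.ofReal_mul (by positivity), ← Real.rpow_add (by norm_num)]
            congr 2
            rw [ENNReal.toReal_inv, ENNReal.toReal_inv, ha]
            field_simp
            ring_nf
    exact ENNReal.div_le_div_right hkey _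
  have hlow : ∀ φ : Polynomial ℝ, φ.Monic → φ.natDegree = n →
      ENNReal.ofReal ((2:ℝ) ^ ((1:ℤ) - (n:ℤ))) ≤ eLpNorm (fun x => φ.eval x) ⊤ μ := by
    intro φ hm hd
    by_contra hcon
    push_neg at hcon
    refine cheb_extremal hn hm hd (fun x hx => ?_)
    have hpt := (point_le_eLpNormTop (Polynomial.continuous φ) hx).trans_lt hcon
    exact (ENNReal.ofReal_lt_ofReal_iff (by positivity)).1 hpt
  have hcs : ENNReal.ofReal ((2:ℝ) ^ (-(n:ℝ) - ((⊤:ℝ≥0∞))⁻¹.toReal))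
      = ENNReal.ofReal ((2:ℝ) ^ (-(n:ℝ))) := by
    simp
  have hT : ENNReal.ofReal ((2 : ℝ) ^ ((1 : ℤ) - 2 * n) / n.factorial)
      = ENNReal.ofReal ((2:ℝ) ^ (-(n:ℝ))) * ENNReal.ofReal ((2:ℝ) ^ ((1:ℤ) - (n:ℤ))) /
        (n.factorial : ℝ≥0∞) := by
    have hr : (2:ℝ) ^ (-(n:ℝ)) * (2:ℝ) ^ ((1:ℤ) - (n:ℤ)) = (2:ℝ) ^ ((1:ℤ) - 2 * (n:ℤ)) := by
      rw [show (-(n:ℝ)) = ((-(n:ℤ) : ℤ) : ℝ) by push_cast; ring, Real.rpow_intCast,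
        ← zpow_add₀ (two_ne_zero)]
      congr 1; ring
    rw [← ENNReal.ofReal_mul (by positivity), hr,
      show ((n.factorial : ℝ≥0∞)) = ENNReal.ofReal (n.factorial : ℝ) by
        rw [ENNReal.ofReal_natCast],
      ← ENNReal.ofReal_div_of_pos (by exact_mod_cast n.factorial_pos)]
  have h2 : trapConst n ⊤ = ENNReal.ofReal ((2 : ℝ) ^ ((1 : ℤ) - 2 * n) / n.factorial) := by
    apply le_antisymm
    · rw [trapConst]
      refine le_trans (sInf_le ⟨mcheb n, ⟨mcheb_monic hn, mcheb_natDegree⟩, rfl⟩) ?_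
      have hbound : eLpNorm (fun x => (mcheb n).eval x) ⊤ μ
          ≤ ENNReal.ofReal ((2:ℝ) ^ ((1:ℤ) - (n:ℤ))) := by
        rw [eLpNorm_exponent_top]
        apply eLpNormEssSup_le_of_ae_bound (C := (2:ℝ) ^ ((1:ℤ) - (n:ℤ)))
        rw [hμ, ae_restrict_iff' measurableSet_Icc]
        exact ae_of_all _ (fun x hx => by
          simpa [Real.norm_eq_abs] using mcheb_eval_le hx)
      rw [hT, hcs]
      exact ENNReal.div_le_div_right (mul_le_mul_right hbound _) _
    · rw [trapConst]
      apply le_sInf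
      rintro v ⟨φ, ⟨hm, hd⟩, rfl⟩
      rw [hT, hcs]
      exact ENNReal.div_le_div_right (mul_le_mul_right (hlow φ hm hd) _) _
  exact ⟨h1, h2, fun p q h => h1 1 ⊤ p q ENNReal.HolderConjugate.one_top h (ENNReal.HolderConjugate.one_le p q)⟩
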